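/- Let R be a ring with involution *. If every normal element of R (element commuting with its image under *) is central, and R is a central simple algebra, then R is commutative (a field). -/
import Mathlib


/-- An involution on a ring: an additive, anti-multiplicative map of order at most 2. -/
def IsInvolution {R : Type*} [Ring R] (τ : R → R) : Prop :=
  (∀ a b : R, τ (a + b) = τ a + τ b) ∧ (∀ a b : R, τ (a * b) = τ b * τ a) ∧
    (∀ a : R, τ (τ a) = a)

/-- A central simple algebra with involution in which every normal element
(i.e. every element commuting with its image under the involution) is central
is commutative (hence a field). -/
theorem stmt_0 (F R : Type*) [Field F] [Ring R] [Algebra F R]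
    [Algebra.IsCentral F R] [IsSimpleRing R]
    (τ : R → R) (hτ : IsInvolution τ)
    (hnormal : ∀ a : R, a * τ a = τ a * a → a ∈ Set.center R) :
    ∀ x y : R, x * y = y * x := by
  obtain ⟨hadd, hmul, hinv⟩ := hτ
  -- every symmetric-type element a + τ a is central
  have hsym : ∀ a : R, (a + τ a) ∈ Set.center R := by
    intro a
    apply hnormal
    have : τ (a + τ a) = a + τ a := by
      rw [hadd, hinv, add_comm]
    rw [this]
  -- hence every element is central
  have hcent : ∀ a : R, a ∈ Set.center R := by
    intro a
    apply hnormal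
    have hs := (Set.mem_center_iff.mp (hsym a)).comm a
    have hτa : τ a = (a + τ a) - a := (add_sub_cancel_left a (τ a)).symm
    rw [hτa, mul_sub, sub_mul, hs]
  intro x y
  exact ((Set.mem_center_iff.mp (hcent x)).comm y)
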